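/- arXiv:1902.08011 — 6 statements merged into one kernel-verified Lean document; each statement's English description precedes it below -/
import Mathlib

section
/- Let gcd(P²,u) = R (monic gcd). Then R is the square of a monic polynomial Q, and moreover Q = gcd(P,u,v) (monic gcd). In other words, gcd(P²,u) = (gcd(P,u,v))². -/
open Polynomial

lemma gcd_sq_aux (a b : Polynomial ℂ) : gcd (a ^ 2) (b ^ 2) = gcd a b ^ 2 := by
  rcases eq_or_ne (gcd a b) 0 with hd | hd
  · simp only [gcd_eq_zero_iff] at hd
    simp [hd.1, hd.2]
  · have hmon : (gcd a b).Monic := by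
      have := Polynomial.monic_normalize (R := ℂ) hd
      rwa [normalize_gcd] at this
    obtain ⟨a', b', ha, hb, hu⟩ := extract_gcd a b
    have hcop : IsCoprime a' b' := (gcd_isUnit_iff _ _).mp hu
    have h2 : gcd (a' ^ 2) (b' ^ 2) = 1 := by
      rw [← normalize_gcd, normalize_eq_one]
      exact (gcd_isUnit_iff _ _).mpr (hcop.pow)
    set d := gcd a b with hddef
    calc gcd (a ^ 2) (b ^ 2) = gcd (d ^ 2 * a' ^ 2) (d ^ 2 * b' ^ 2) := by
          rw [ha, hb, mul_pow, mul_pow]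
      _ = normalize (d ^ 2) * gcd (a' ^ 2) (b' ^ 2) := gcd_mul_left _ _ _
      _ = d ^ 2 := by rw [h2, mul_one, (hmon.pow 2).normalize_eq_self]

/-- Lemma (Deg), first part: for a point `[[v,u],[w,-v]]` of the maximal stratum
`M_{g,g}(h)` with `h = P² h'` (`P` the maximal quadratic divisor of `h`), the monic
gcd `R = gcd(P², u)` is the square of a monic polynomial `Q`, and `Q = gcd(P, u, v)`. -/
theorem stmt_0
    (g : ℕ) (hg : 1 ≤ g) (h h' P u v w : Polynomial ℂ)
    (hhmon : h.Monic) (hhdeg : h.natDegree = 2 * g + 1)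
    (hPmon : P.Monic) (hPdvd : P ^ 2 ∣ h)
    (hPmax : ∀ S : Polynomial ℂ, S.Monic → S ^ 2 ∣ h → S.natDegree ≤ P.natDegree)
    (hh' : h = P ^ 2 * h')
    (humon : u.Monic) (hudeg : u.natDegree = g)
    (hwmon : w.Monic) (hwdeg : w.natDegree = g + 1)
    (hvdeg : v.degree ≤ ((g - 1 : ℕ) : WithBot ℕ))
    (heq : v ^ 2 + u * w = h)
    (hcop : gcd u (gcd v w) = 1) :
    ∃ Q : Polynomial ℂ, Q.Monic ∧ gcd (P ^ 2) u = Q ^ 2 ∧ Q = gcd P (gcd u v) := by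
  set Q : Polynomial ℂ := gcd P (gcd u v) with hQdef
  have hu0 : u ≠ 0 := humon.ne_zero
  have hQ0 : Q ≠ 0 := by
    simp only [hQdef, Ne, gcd_eq_zero_iff, not_and]
    intro _ h1 _; exact hu0 h1
  have hQmon : Q.Monic := by
    have := Polynomial.monic_normalize (R := ℂ) hQ0
    rwa [hQdef, normalize_gcd] at this
  refine ⟨Q, hQmon, ?_, rfl⟩
  have hQP : Q ∣ P := gcd_dvd_left _ _
  have hQu : Q ∣ u := (gcd_dvd_right _ _).trans (gcd_dvd_left _ _)
  have hQv : Q ∣ v := (gcd_dvd_right _ _).trans (gcd_dvd_right _ _)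
  have huw : u * w = P ^ 2 * h' - v ^ 2 := by
    rw [← hh', ← heq]; ring
  -- Q is coprime to w
  have hQw : IsCoprime Q w := by
    have h1 : IsCoprime (gcd u v) w := by
      apply (gcd_isUnit_iff _ _).mp
      rw [← gcd_assoc] at hcop
      rw [hcop]; exact isUnit_one
    exact h1.of_isCoprime_of_dvd_left (gcd_dvd_right _ _)
  -- Q² divides u
  have hQ2uw : Q ^ 2 ∣ u * w := by
    rw [huw]
    exact dvd_sub (dvd_mul_of_dvd_left (pow_dvd_pow_of_dvd hQP 2) _)
      (pow_dvd_pow_of_dvd hQv 2)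
  have hQ2u : Q ^ 2 ∣ u := (hQw.pow_left).dvd_of_dvd_mul_right hQ2uw
  have hdvd1 : Q ^ 2 ∣ gcd (P ^ 2) u :=
    dvd_gcd (pow_dvd_pow_of_dvd hQP 2) hQ2u
  -- conversely
  set R : Polynomial ℂ := gcd (P ^ 2) u with hRdef
  have hRP2 : R ∣ P ^ 2 := gcd_dvd_left _ _
  have hRu : R ∣ u := gcd_dvd_right _ _
  have hRv2 : R ∣ v ^ 2 := by
    have : v ^ 2 = P ^ 2 * h' - u * w := by rw [← hh', ← heq]; ring
    rw [this]
    exact dvd_sub (hRP2.mul_right _) (hRu.mul_right _)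
  have hdvd2 : R ∣ Q ^ 2 := by
    have h1 : R ∣ gcd (P ^ 2) (u ^ 2) := dvd_gcd hRP2 (hRu.trans (dvd_pow_self u two_ne_zero))
    have h2 : R ∣ gcd (gcd P u ^ 2) (v ^ 2) := by
      refine dvd_gcd ?_ hRv2
      rwa [gcd_sq_aux] at h1
    rw [gcd_sq_aux] at h2
    rwa [gcd_assoc] at h2
  refine dvd_antisymm_of_normalize_eq ?_ ?_ hdvd2 hdvd1
  · exact normalize_gcd _ _
  · exact (hQmon.pow 2).normalize_eq_self
end

section
/- Conversely, if Q = gcd(P,u,v) (monic gcd), then gcd(P²,u) = Q². -/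
open Polynomial

/-- In a normalized gcd monoid, `gcd (a²) (b²)` divides `(gcd a b)²`. -/
lemma aux_gcd_sq_dvd (a b : Polynomial ℂ) : gcd (a ^ 2) (b ^ 2) ∣ gcd a b ^ 2 := by
  obtain ⟨a', b', ha, hb, hu⟩ := extract_gcd a b
  have key := _root_.gcd_mul_left (gcd a b ^ 2) (a' ^ 2) (b' ^ 2)
  rw [← mul_pow, ← mul_pow, ← ha, ← hb] at key
  have h1 : IsUnit (gcd (a' ^ 2) (b' ^ 2)) :=
    (gcd_isUnit_iff _ _).mpr (((gcd_isUnit_iff _ _).mp hu).pow)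
  rw [key]
  calc normalize (gcd a b ^ 2) * gcd (a' ^ 2) (b' ^ 2)
      ∣ gcd a b ^ 2 * 1 := mul_dvd_mul (normalize_dvd_iff.mpr dvd_rfl) h1.dvd
    _ = gcd a b ^ 2 := mul_one _

/-- Lemma (Deg), converse of the first part: if `Q = gcd(P, u, v)` (monic gcd),
then `gcd(P², u) = Q²`. -/
theorem stmt_1
    (g : ℕ) (hg : 1 ≤ g) (h h' P u v w : Polynomial ℂ)
    (hhmon : h.Monic) (hhdeg : h.natDegree = 2 * g + 1)
    (hPmon : P.Monic) (hPdvd : P ^ 2 ∣ h)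
    (hPmax : ∀ S : Polynomial ℂ, S.Monic → S ^ 2 ∣ h → S.natDegree ≤ P.natDegree)
    (hh' : h = P ^ 2 * h')
    (humon : u.Monic) (hudeg : u.natDegree = g)
    (hwmon : w.Monic) (hwdeg : w.natDegree = g + 1)
    (hvdeg : v.degree ≤ ((g - 1 : ℕ) : WithBot ℕ))
    (heq : v ^ 2 + u * w = h)
    (hcop : gcd u (gcd v w) = 1)
    (Q : Polynomial ℂ) (hQ : Q = gcd P (gcd u v)) :
    gcd (P ^ 2) u = Q ^ 2 := by
  have huw : u * w = P ^ 2 * h' - v ^ 2 := by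
    rw [hh'] at heq; linear_combination heq
  have hQP : Q ∣ P := hQ ▸ gcd_dvd_left _ _
  have hQu : Q ∣ u := hQ ▸ (gcd_dvd_right _ _).trans (gcd_dvd_left _ _)
  have hQv : Q ∣ v := hQ ▸ (gcd_dvd_right _ _).trans (gcd_dvd_right _ _)
  -- Q is coprime to w
  have hQw : IsCoprime Q w := by
    rw [← gcd_isUnit_iff]
    apply isUnit_of_dvd_one
    rw [← hcop]
    exact dvd_gcd ((gcd_dvd_left _ _).trans hQu)
      (dvd_gcd ((gcd_dvd_left _ _).trans hQv) (gcd_dvd_right _ _))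
  -- Q² divides u
  have hQ2uw : Q ^ 2 ∣ u * w := by
    rw [huw]
    exact dvd_sub ((pow_dvd_pow_of_dvd hQP 2).mul_right _) (pow_dvd_pow_of_dvd hQv 2)
  have hQ2u : Q ^ 2 ∣ u := (hQw.pow_left : IsCoprime (Q ^ 2) w).dvd_of_dvd_mul_right hQ2uw
  -- forward divisibility
  have fwd : Q ^ 2 ∣ gcd (P ^ 2) u := dvd_gcd (pow_dvd_pow_of_dvd hQP 2) hQ2u
  -- reverse divisibility
  set D := gcd (P ^ 2) u with hD
  have hDP : D ∣ P ^ 2 := gcd_dvd_left _ _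
  have hDu : D ∣ u := gcd_dvd_right _ _
  have hDv2 : D ∣ v ^ 2 := by
    have : v ^ 2 = P ^ 2 * h' - u * w := by linear_combination huw
    rw [this]
    exact dvd_sub (hDP.mul_right _) (hDu.mul_right _)
  have step1 : D ∣ gcd (P ^ 2) (gcd (u ^ 2) (v ^ 2)) :=
    dvd_gcd hDP (dvd_gcd (hDu.trans (dvd_pow_self u two_ne_zero)) hDv2)
  have step2 : gcd (P ^ 2) (gcd (u ^ 2) (v ^ 2)) ∣ gcd (P ^ 2) (gcd u v ^ 2) :=
    dvd_gcd (gcd_dvd_left _ _) ((gcd_dvd_right _ _).trans (aux_gcd_sq_dvd u v))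
  have step3 : gcd (P ^ 2) (gcd u v ^ 2) ∣ Q ^ 2 := hQ ▸ aux_gcd_sq_dvd P (gcd u v)
  have bwd : D ∣ Q ^ 2 := step1.trans (step2.trans step3)
  -- conclude from mutual divisibility and monicity
  have hPne : P ≠ 0 := hPmon.ne_zero
  have hQne : Q ≠ 0 := fun hq => hPne (by simpa [hq] using hQP)
  have hQmon : Q.Monic := by
    have := Polynomial.monic_normalize (p := Q) hQne
    rwa [hQ, normalize_gcd, ← hQ] at this
  have hDmon : D.Monic := by
    have hDne : D ≠ 0 := fun hd => hPne (by
      have := (gcd_eq_zero_iff _ _).mp (hD ▸ hd)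
      exact pow_eq_zero_iff two_ne_zero |>.mp this.1)
    have := Polynomial.monic_normalize (p := D) hDne
    rwa [hD, normalize_gcd, ← hD] at this
  exact Polynomial.eq_of_monic_of_associated hDmon (hQmon.pow _)
    (associated_of_dvd_dvd bwd fwd)
end

section
/- Every root a ∈ ℂ of the polynomial gcd(P²,u) (monic gcd) has even multiplicity in gcd(P²,u); equivalently, there exists a monic polynomial Q ∈ ℂ[X] with gcd(P²,u) = Q². -/
open Polynomial

private lemma mult_le_of_dvd {p q : Polynomial ℂ} (hq : q ≠ 0) (h : p ∣ q) (a : ℂ) :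
    rootMultiplicity a p ≤ rootMultiplicity a q :=
  (le_rootMultiplicity_iff hq).2 ((pow_rootMultiplicity_dvd p a).trans h)

private lemma mult_gcd (p q : Polynomial ℂ) (hp : p ≠ 0) (hq : q ≠ 0) (a : ℂ) :
    rootMultiplicity a (gcd p q) = min (rootMultiplicity a p) (rootMultiplicity a q) := by
  have hg : gcd p q ≠ 0 := fun h => hp ((gcd_eq_zero_iff p q).1 h).1
  refine le_antisymm (le_min (mult_le_of_dvd hp (gcd_dvd_left p q) a)
    (mult_le_of_dvd hq (gcd_dvd_right p q) a)) ?_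
  rw [le_rootMultiplicity_iff hg]
  exact dvd_gcd ((pow_dvd_pow _ (min_le_left _ _)).trans (pow_rootMultiplicity_dvd p a))
    ((pow_dvd_pow _ (min_le_right _ _)).trans (pow_rootMultiplicity_dvd q a))

private lemma mult_add_of_lt {p q : Polynomial ℂ} (a : ℂ) (hp : p ≠ 0)
    (hlt : rootMultiplicity a p < rootMultiplicity a q) (hpq : p + q ≠ 0) :
    rootMultiplicity a (p + q) = rootMultiplicity a p := by
  refine le_antisymm ?_ (le_trans (le_of_eq (min_eq_left hlt.le).symm)
    (rootMultiplicity_add a hpq))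
  rw [rootMultiplicity_le_iff hpq]
  intro hdvd
  have hq : (X - C a) ^ (rootMultiplicity a p + 1) ∣ q :=
    (pow_dvd_pow _ hlt).trans (pow_rootMultiplicity_dvd q a)
  have : (X - C a) ^ (rootMultiplicity a p + 1) ∣ p := by
    have := dvd_sub hdvd hq
    simpa using this
  exact pow_rootMultiplicity_not_dvd hp a this

private lemma sq_of_even_mult {d : Polynomial ℂ} (hd : d.Monic)
    (he : ∀ a : ℂ, Even (rootMultiplicity a d)) :
    ∃ Q : Polynomial ℂ, Q.Monic ∧ d = Q ^ 2 := by
  classical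
  refine ⟨∏ a ∈ d.roots.toFinset, (X - C a) ^ (rootMultiplicity a d / 2),
    monic_prod_of_monic _ _ fun a _ => (monic_X_sub_C a).pow _, ?_⟩
  have hsplit : d = (d.roots.map fun a => X - C a).prod :=
    (IsAlgClosed.splits d).eq_prod_roots_of_monic hd
  rw [← Finset.prod_pow]
  conv_lhs => rw [hsplit]
  rw [Finset.prod_multiset_map_count]
  refine Finset.prod_congr rfl fun a _ => ?_
  rw [count_roots, ← pow_mul, Nat.div_mul_cancel (he a).two_dvd]

/-- Every root of `gcd(P², u)` has even multiplicity; equivalently `gcd(P², u)` is the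
square of a monic polynomial. -/
theorem stmt_4
    (g : ℕ) (hg : 1 ≤ g) (h h' P u v w : Polynomial ℂ)
    (hhmon : h.Monic) (hhdeg : h.natDegree = 2 * g + 1)
    (hPmon : P.Monic) (hPdvd : P ^ 2 ∣ h)
    (hPmax : ∀ S : Polynomial ℂ, S.Monic → S ^ 2 ∣ h → S.natDegree ≤ P.natDegree)
    (hh' : h = P ^ 2 * h')
    (humon : u.Monic) (hudeg : u.natDegree = g)
    (hwmon : w.Monic) (hwdeg : w.natDegree = g + 1)
    (hvdeg : v.degree ≤ ((g - 1 : ℕ) : WithBot ℕ))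
    (heq : v ^ 2 + u * w = h)
    (hcop : gcd u (gcd v w) = 1) :
    (∀ a : ℂ, (gcd (P ^ 2) u).IsRoot a →
      Even (rootMultiplicity a (gcd (P ^ 2) u))) ∧
    ∃ Q : Polynomial ℂ, Q.Monic ∧ gcd (P ^ 2) u = Q ^ 2 := by
  classical
  have hh0 : h ≠ 0 := hhmon.ne_zero
  have hP0 : P ≠ 0 := hPmon.ne_zero
  have hP20 : (P : Polynomial ℂ) ^ 2 ≠ 0 := pow_ne_zero 2 hP0
  have hu0 : u ≠ 0 := humon.ne_zero
  have hw0 : w ≠ 0 := hwmon.ne_zero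
  have hh'0 : h' ≠ 0 := by
    intro h0; rw [h0, mul_zero] at hh'; exact hh0 hh'
  have key : ∀ a : ℂ, (gcd (P ^ 2) u).IsRoot a →
      Even (rootMultiplicity a (gcd (P ^ 2) u)) := by
    intro a ha
    rw [mult_gcd _ _ hP20 hu0 a]
    set α := rootMultiplicity a P with hαdef
    set B := rootMultiplicity a u with hBdef
    have hA : rootMultiplicity a (P ^ 2) = 2 * α := by
      rw [sq, rootMultiplicity_mul (mul_ne_zero hP0 hP0)]; ring
    have haP2 : (P ^ 2).IsRoot a := ha.dvd (gcd_dvd_left _ _)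
    have haP : P.IsRoot a := by
      have h2 : eval a P ^ 2 = 0 := by simpa [IsRoot] using haP2
      exact (pow_eq_zero_iff two_ne_zero).1 h2
    have hα1 : 1 ≤ α := (rootMultiplicity_pos hP0).2 haP
    have hau : u.IsRoot a := ha.dvd (gcd_dvd_right _ _)
    have hB1 : 1 ≤ B := (rootMultiplicity_pos hu0).2 hau
    set ε := rootMultiplicity a h' with hεdef
    have hε1 : ε ≤ 1 := by
      by_contra hc
      push_neg at hc
      have hdvd : (X - C a) ^ 2 ∣ h' :=
        (pow_dvd_pow _ hc).trans (pow_rootMultiplicity_dvd h' a)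
      have hsq : (P * (X - C a)) ^ 2 ∣ h := by
        rw [hh', mul_pow]; exact mul_dvd_mul_left _ hdvd
      have hle := hPmax _ (hPmon.mul (monic_X_sub_C a)) hsq
      rw [natDegree_mul hP0 (X_sub_C_ne_zero a), natDegree_X_sub_C] at hle
      omega
    have hH : rootMultiplicity a h = 2 * α + ε := by
      rw [hh', rootMultiplicity_mul (mul_ne_zero hP20 hh'0), hA]
    have hw_or_v : ¬(v.IsRoot a ∧ w.IsRoot a) := by
      rintro ⟨hv, hw⟩
      have h1 : (X - C a) ∣ gcd u (gcd v w) :=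
        dvd_gcd (dvd_iff_isRoot.2 hau) (dvd_gcd (dvd_iff_isRoot.2 hv) (dvd_iff_isRoot.2 hw))
      rw [hcop] at h1
      exact (Polynomial.not_isUnit_X_sub_C a) (isUnit_of_dvd_one h1)
    rw [hA]
    by_cases hv0 : v = 0
    · have huw : u * w = h := by rw [← heq, hv0]; ring
      have hwroot : ¬w.IsRoot a := fun hw => hw_or_v ⟨by simp [hv0, IsRoot], hw⟩
      have hD : rootMultiplicity a w = 0 := rootMultiplicity_eq_zero hwroot
      have hBε : B = 2 * α + ε := by
        have := rootMultiplicity_mul (x := a) (mul_ne_zero hu0 hw0)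
        rw [huw, hH, hD, add_zero] at this
        exact this.symm
      have hmin : min (2 * α) B = 2 * α := by omega
      rw [hmin]; exact even_two_mul α
    · have hγroot : v.IsRoot a := by
        have h0 : eval a v ^ 2 + eval a u * eval a w = eval a h := by
          have := congrArg (eval a) heq; simpa using this
        have hh_a : eval a h = 0 := haP2.dvd hPdvd
        have hu_a : eval a u = 0 := hau
        have hv2 : eval a v ^ 2 = 0 := by
          rw [hu_a, zero_mul, add_zero] at h0; rw [h0, hh_a]
        exact (pow_eq_zero_iff two_ne_zero).1 hv2
      set γ := rootMultiplicity a v with hγdef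
      have hγ1 : 1 ≤ γ := (rootMultiplicity_pos hv0).2 hγroot
      have hwroot : ¬w.IsRoot a := fun hw => hw_or_v ⟨hγroot, hw⟩
      have hD : rootMultiplicity a w = 0 := rootMultiplicity_eq_zero hwroot
      have hBuw : rootMultiplicity a (u * w) = B := by
        rw [rootMultiplicity_mul (mul_ne_zero hu0 hw0), hD, add_zero]
      have hv20 : v ^ 2 ≠ 0 := pow_ne_zero _ hv0
      have hnv20 : -(v ^ 2) ≠ 0 := neg_ne_zero.2 hv20
      have hV2 : rootMultiplicity a (v ^ 2) = 2 * γ := by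
        rw [sq, rootMultiplicity_mul (mul_ne_zero hv0 hv0)]; ring
      have hneg : rootMultiplicity a (-(v ^ 2)) = 2 * γ := by
        have hone : rootMultiplicity a (-1 : Polynomial ℂ) = 0 :=
          rootMultiplicity_eq_zero (by simp [IsRoot])
        have hrw : -(v ^ 2) = (-1 : Polynomial ℂ) * v ^ 2 := by ring
        rw [hrw, rootMultiplicity_mul (by rw [← hrw]; exact hnv20), hone, zero_add, hV2]
      have hsum : -(v ^ 2) + h = u * w := by rw [← heq]; ring
      have hsum0 : -(v ^ 2) + h ≠ 0 := by rw [hsum]; exact mul_ne_zero hu0 hw0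
      rcases lt_trichotomy (2 * γ) (2 * α + ε) with hlt | heq2 | hgt
      · have := mult_add_of_lt a hnv20 (by rw [hneg, hH]; exact hlt) hsum0
        rw [hsum, hBuw, hneg] at this
        have hmin : min (2 * α) B = 2 * γ := by omega
        rw [hmin]; exact even_two_mul γ
      · have hε0 : ε = 0 := by omega
        have hge : 2 * α ≤ B := by
          have h1 := rootMultiplicity_add (p := -(v ^ 2)) (q := h) a hsum0
          rw [hsum, hBuw, hneg, hH] at h1
          omega
        have hmin : min (2 * α) B = 2 * α := by omega
        rw [hmin]; exact even_two_mul α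
      · have hsum' : h + -(v ^ 2) = u * w := by rw [← heq]; ring
        have hsum0' : h + -(v ^ 2) ≠ 0 := by rw [hsum']; exact mul_ne_zero hu0 hw0
        have := mult_add_of_lt a hh0 (by rw [hneg, hH]; exact hgt) hsum0'
        rw [hsum', hBuw, hH] at this
        have hmin : min (2 * α) B = 2 * α := by omega
        rw [hmin]; exact even_two_mul α
  refine ⟨key, ?_⟩
  have hg0 : gcd (P ^ 2) u ≠ 0 := fun h0 => hP20 ((gcd_eq_zero_iff _ _).1 h0).1
  have hgmon : (gcd (P ^ 2) u).Monic := by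
    have h1 : normalize (gcd (P ^ 2) u) = gcd (P ^ 2) u := normalize_gcd (P ^ 2) u
    rw [← h1]; exact monic_normalize hg0
  refine sq_of_even_mult hgmon fun a => ?_
  by_cases ha : (gcd (P ^ 2) u).IsRoot a
  · exact key a ha
  · rw [rootMultiplicity_eq_zero ha]; exact Even.zero
end

section
/- If Q = gcd(P,u,v) (monic gcd), then Q² divides u. (Indeed, from v² + u·w = P²·h' one gets Q²·(P_Q²·h' − v_Q²) = u·w, where P = Q·P_Q and v = Q·v_Q, and gcd(u,v,w) = 1 then forces Q² ∣ u.) -/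
open Polynomial

/-- If `Q = gcd(P, u, v)` (monic gcd), then `Q²` divides `u`. -/
theorem stmt_6
    (g : ℕ) (hg : 1 ≤ g) (h h' P u v w : Polynomial ℂ)
    (hhmon : h.Monic) (hhdeg : h.natDegree = 2 * g + 1)
    (hPmon : P.Monic) (hPdvd : P ^ 2 ∣ h)
    (hPmax : ∀ S : Polynomial ℂ, S.Monic → S ^ 2 ∣ h → S.natDegree ≤ P.natDegree)
    (hh' : h = P ^ 2 * h')
    (humon : u.Monic) (hudeg : u.natDegree = g)
    (hwmon : w.Monic) (hwdeg : w.natDegree = g + 1)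
    (hvdeg : v.degree ≤ ((g - 1 : ℕ) : WithBot ℕ))
    (heq : v ^ 2 + u * w = h)
    (hcop : gcd u (gcd v w) = 1)
    (Q : Polynomial ℂ) (hQ : Q = gcd P (gcd u v)) :
    Q ^ 2 ∣ u := by
  have hQP : Q ∣ P := hQ ▸ gcd_dvd_left _ _
  have hQu : Q ∣ u := hQ ▸ dvd_trans (gcd_dvd_right _ _) (gcd_dvd_left _ _)
  have hQv : Q ∣ v := hQ ▸ dvd_trans (gcd_dvd_right _ _) (gcd_dvd_right _ _)
  have huw : u * w = P ^ 2 * h' - v ^ 2 := by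
    have := heq.trans hh'
    linear_combination this
  have hdvd : Q ^ 2 ∣ u * w := by
    rw [huw]
    exact dvd_sub (Dvd.dvd.mul_right (pow_dvd_pow_of_dvd hQP 2) h')
      (pow_dvd_pow_of_dvd hQv 2)
  have hunit : IsUnit (gcd Q w) := by
    have h1 : gcd Q w ∣ gcd u (gcd v w) := by
      refine dvd_gcd (dvd_trans (gcd_dvd_left _ _) hQu)
        (dvd_gcd (dvd_trans (gcd_dvd_left _ _) hQv) (gcd_dvd_right _ _))
    rw [hcop] at h1
    exact isUnit_of_dvd_one h1
  have hcQw : IsCoprime Q w := (gcd_isUnit_iff _ _).mp hunit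
  exact (IsCoprime.pow_left hcQw : IsCoprime (Q^2) w).dvd_of_dvd_mul_right hdvd
end

section
/- Let Q be a monic polynomial with Q² = gcd(P²,u) and Q = gcd(P,u,v) (monic gcds), and write u = Q²·u_{Q²}, v = Q·v_Q, P = Q·P_Q. If x₀ ∈ ℂ satisfies u_{Q²}(x₀) = 0, Q(x₀) ≠ 0 and P_Q(x₀) ≠ 0, then (v_Q(x₀)/P_Q(x₀))² = h'(x₀); in other words, the point (x₀, v_Q(x₀)/P_Q(x₀)) lies on the smooth affine curve C' : z² = h'(x). -/
open Polynomial

/-- The zeros of `u_{Q²}` give points `(x₀, v_Q(x₀)/P_Q(x₀))` on the smooth curve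
`C' : z² = h'(x)`. -/
theorem stmt_7
    (g : ℕ) (hg : 1 ≤ g) (h h' P u v w : Polynomial ℂ)
    (hhmon : h.Monic) (hhdeg : h.natDegree = 2 * g + 1)
    (hPmon : P.Monic) (hPdvd : P ^ 2 ∣ h)
    (hPmax : ∀ S : Polynomial ℂ, S.Monic → S ^ 2 ∣ h → S.natDegree ≤ P.natDegree)
    (hh' : h = P ^ 2 * h')
    (humon : u.Monic) (hudeg : u.natDegree = g)
    (hwmon : w.Monic) (hwdeg : w.natDegree = g + 1)
    (hvdeg : v.degree ≤ ((g - 1 : ℕ) : WithBot ℕ))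
    (heq : v ^ 2 + u * w = h)
    (hcop : gcd u (gcd v w) = 1)
    (Q uQ2 vQ PQ : Polynomial ℂ) (hQmon : Q.Monic)
    (hQgcd2 : Q ^ 2 = gcd (P ^ 2) u) (hQgcd : Q = gcd P (gcd u v))
    (hu' : u = Q ^ 2 * uQ2) (hv' : v = Q * vQ) (hP' : P = Q * PQ)
    (x₀ : ℂ) (hx₀ : uQ2.eval x₀ = 0) (hQx₀ : Q.eval x₀ ≠ 0) (hPQx₀ : PQ.eval x₀ ≠ 0) :
    (vQ.eval x₀ / PQ.eval x₀) ^ 2 = h'.eval x₀ := by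
  have key : Q ^ 2 * (vQ ^ 2 + uQ2 * w) = Q ^ 2 * (PQ ^ 2 * h') := by
    have := heq.trans hh'
    rw [hu', hv', hP'] at this
    ring_nf at this ⊢
    linear_combination this
  have hQ0 : (Q : Polynomial ℂ) ^ 2 ≠ 0 := pow_ne_zero _ hQmon.ne_zero
  have key2 : vQ ^ 2 + uQ2 * w = PQ ^ 2 * h' := mul_left_cancel₀ hQ0 key
  have := congrArg (Polynomial.eval x₀) key2
  simp only [eval_add, eval_mul, eval_pow, hx₀] at this
  field_simp
  linear_combination this
end

section
/- Let A(X) = [[v, u],[w, −v]] be the 2×2 matrix over ℂ[X], let u_{g−1} denote the coefficient of X^{g−1} in u and w_g the coefficient of X^g in w, and set B(X) = [[0, 1],[X + w_g − u_{g−1}, 0]]. Then: (i) B(X) equals the matrix obtained from A(X) by taking entrywise the quotient of polynomial division by X^g (the polynomial part of A(X)/X^g) and subtracting u_{g−1} from the (2,1) entry; (ii) the (1,2) entry of the commutator [A(X), B(X)] = A(X)B(X) − B(X)A(X) equals 2v(X). In particular, the Mumford vector field D_{g−1} acts on the coordinate u by D_{g−1}(u) = 2v. -/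
open Polynomial Matrix

/-- For `A(X) = [[v,u],[w,-v]]` in the Mumford phase space `M_g`, the matrix
`B(X) = [[0,1],[X + w_g - u_{g-1}, 0]]` is the polynomial part of `A(X)/X^g`
minus `u_{g-1}` in the `(2,1)` entry, and the `(1,2)` entry of the commutator
`[A(X), B(X)]` is `2 v(X)`; i.e. the Mumford vector field `D_{g-1}` satisfies
`D_{g-1}(u) = 2v`. -/
theorem stmt_8
    (g : ℕ) (hg : 1 ≤ g) (u v w : Polynomial ℂ)
    (humon : u.Monic) (hudeg : u.natDegree = g)
    (hwmon : w.Monic) (hwdeg : w.natDegree = g + 1)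
    (hvdeg : v.degree ≤ ((g - 1 : ℕ) : WithBot ℕ)) :
    (!![(0 : Polynomial ℂ), 1; X + C (w.coeff g - u.coeff (g - 1)), 0]
        = Matrix.of (fun i j =>
            (!![v, u; w, -v] : Matrix (Fin 2) (Fin 2) (Polynomial ℂ)) i j /ₘ X ^ g)
          - C (u.coeff (g - 1)) • !![0, 0; 1, 0]) ∧
    ((!![v, u; w, -v] * !![(0 : Polynomial ℂ), 1; X + C (w.coeff g - u.coeff (g - 1)), 0]
        - !![(0 : Polynomial ℂ), 1; X + C (w.coeff g - u.coeff (g - 1)), 0] * !![v, u; w, -v])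
        0 1 = 2 * v) := by
  have hXg : (X ^ g : Polynomial ℂ).Monic := monic_X_pow g
  have hXgdeg : (X ^ g : Polynomial ℂ).degree = g := degree_X_pow g
  -- v /ₘ X^g = 0
  have hvlt : v.degree < (X ^ g : Polynomial ℂ).degree := by
    rw [hXgdeg]
    refine lt_of_le_of_lt hvdeg ?_
    exact_mod_cast Nat.sub_lt hg one_pos
  have hv0 : v /ₘ X ^ g = 0 := (divByMonic_eq_zero_iff hXg).2 hvlt
  have hnv0 : (-v) /ₘ X ^ g = 0 := by
    rw [divByMonic_eq_zero_iff hXg, degree_neg]; exact hvlt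
  -- u /ₘ X^g = 1
  have hu1 : u /ₘ X ^ g = 1 := by
    refine (div_modByMonic_unique 1 (u - X ^ g) hXg ⟨by ring, ?_⟩).1
    rw [hXgdeg, degree_lt_iff_coeff_zero]
    intro m hm
    rcases eq_or_lt_of_le hm with h | h
    · simp [coeff_sub, ← h, ← hudeg, humon.coeff_natDegree]
    · have : u.coeff m = 0 := coeff_eq_zero_of_natDegree_lt (hudeg ▸ h)
      simp [coeff_sub, this, coeff_X_pow, Nat.ne_of_gt h]
  -- w /ₘ X^g = X + C (w.coeff g)
  have hw : w /ₘ X ^ g = X + C (w.coeff g) := by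
    refine (div_modByMonic_unique (X + C (w.coeff g))
      (w - X ^ g * (X + C (w.coeff g))) hXg ⟨by ring, ?_⟩).1
    rw [hXgdeg, degree_lt_iff_coeff_zero]
    intro m hm
    have hexp : X ^ g * (X + C (w.coeff g)) = X ^ (g + 1) + C (w.coeff g) * X ^ g := by
      ring
    rw [coeff_sub, hexp, coeff_add, coeff_X_pow, coeff_C_mul, coeff_X_pow]
    rcases eq_or_lt_of_le hm with h | h
    · rw [← h]
      simp [Nat.ne_of_lt (Nat.lt_succ_self g)]
    · rcases eq_or_lt_of_le (Nat.succ_le_of_lt h) with h2 | h2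
      · rw [← h2]
        have hc : w.coeff (g + 1) = 1 := by rw [← hwdeg]; exact hwmon.coeff_natDegree
        simp [hc, Nat.ne_of_gt (Nat.lt_succ_self g)]
      · have hz : w.coeff m = 0 := coeff_eq_zero_of_natDegree_lt (hwdeg ▸ h2)
        simp [hz, Nat.ne_of_gt h, Nat.ne_of_gt h2]
  constructor
  · ext i j
    fin_cases i <;> fin_cases j <;>
      simp [hv0, hnv0, hu1, hw, C_sub] <;> ring
  · simp [Matrix.mul_apply, Fin.sum_univ_two]
    ring
end
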